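/- In the Weyl module Δ_q(i), let d > 0 be an H-eigenvalue, so the eigenspace is ℂ·m_k with k = (i-d)/2, and let a₁ ∈ ℤ_{≥0}, 1 ≤ a₂ < ℓ with d ≥ a₁ℓ + a₂. Then F^{(a₁ℓ+a₂)} m_k = 0 if and only if m_k = F^{(ℓ-a₂)} y for some y in the H-eigenspace of eigenvalue d + 2(ℓ - a₂); i.e., the kernel of F^{(a₁ℓ+a₂)} on the eigenspace H = d equals the image of the eigenspace H = d+2(ℓ-a₂) under F^{(ℓ-a₂)}. -/

import Mathlib

/-- The balanced Gaussian binomial coefficient. -/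
noncomputable def gB (q : ℂ) : ℕ → ℕ → ℂ
  | _, 0 => 1
  | 0, _ + 1 => 0
  | m + 1, n + 1 => q ^ (-((n : ℤ) + 1)) * gB q m (n + 1) + q ^ ((m : ℤ) - n) * gB q m n

/-- Action of `F^{(n)}` on the Weyl module `Δ_q(i)`. -/
noncomputable def Fop (q : ℂ) (i n : ℕ) (v : ℤ → ℂ) : ℤ → ℂ :=
  fun k => if 0 ≤ k ∧ k ≤ (i : ℤ) then gB q k.toNat n * v (k - n) else 0

/-- The basis vector `m_k` of the Weyl module. -/
noncomputable def delta (k : ℤ) : ℤ → ℂ := fun j => if j = k then 1 else 0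

/-- One-sided Gaussian binomial (in parameter `t`), with bottom argument in `ℤ`. -/
noncomputable def Gq (t : ℂ) : ℕ → ℤ → ℂ
  | 0, n => if n = 0 then 1 else 0
  | m + 1, n => if n < 0 then 0 else Gq t m n + t ^ ((m : ℤ) + 1 - n) * Gq t m (n - 1)

lemma Gq_neg (t : ℂ) (m : ℕ) {n : ℤ} (hn : n < 0) : Gq t m n = 0 := by
  cases m <;> simp [Gq, hn, hn.ne]

lemma Gq_zero (t : ℂ) (m : ℕ) : Gq t m 0 = 1 := by
  induction m with
  | zero => simp [Gq]
  | succ m ih => simp [Gq, ih, Gq_neg t m (by norm_num : (-1:ℤ) < 0)]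

lemma Gq_succ (t : ℂ) (m : ℕ) (n : ℤ) (hn : 0 ≤ n) :
    Gq t (m+1) n = Gq t m n + t ^ ((m : ℤ) + 1 - n) * Gq t m (n - 1) := by
  simp [Gq, not_lt.2 hn]

lemma Gq_gt (t : ℂ) : ∀ (m : ℕ) (n : ℤ), (m : ℤ) < n → Gq t m n = 0 := by
  intro m
  induction m with
  | zero => intro n hn; simp [Gq]; omega
  | succ m ih =>
    intro n hn
    rw [Gq_succ t m n (by omega), ih n (by push_cast at hn ⊢; omega),
      ih (n-1) (by push_cast at hn ⊢; omega)]
    ring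

lemma Gq_diag (t : ℂ) (m : ℕ) : Gq t m (m : ℤ) = 1 := by
  induction m with
  | zero => simp [Gq]
  | succ m ih =>
    rw [show ((m+1:ℕ):ℤ) = (m:ℤ)+1 by push_cast; ring, Gq_succ t m _ (by omega),
      Gq_gt t m ((m:ℤ)+1) (by omega)]
    simpa using ih

noncomputable def Pprod (t : ℂ) (n : ℕ) : ℂ := ∏ j ∈ Finset.range n, (t ^ (j+1) - 1)

lemma Pprod_succ (t : ℂ) (n : ℕ) : Pprod t (n+1) = Pprod t n * (t ^ (n+1) - 1) :=
  Finset.prod_range_succ _ _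

lemma Gfact (t : ℂ) : ∀ m n : ℕ, n ≤ m →
    Gq t m (n : ℤ) * (Pprod t n * Pprod t (m - n)) = Pprod t m := by
  intro m
  induction m with
  | zero => intro n hn; interval_cases n; simp [Gq, Pprod]
  | succ m ih =>
    intro n hn
    match n with
    | 0 => simp [Gq_zero, Pprod]
    | Nat.succ n =>
      rcases eq_or_lt_of_le hn with h | h
      · obtain rfl : n = m := by omega
        rw [Gq_diag]
        simp [Pprod]
      · have hnm : n + 1 ≤ m := by omega
        have hcast : ((n+1:ℕ):ℤ) = (n:ℤ)+1 := by push_cast; ring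
        rw [hcast, Gq_succ t m _ (by omega)]
        rw [show (m:ℤ)+1-((n:ℤ)+1) = ((m-n:ℕ):ℤ) by push_cast [Nat.cast_sub (by omega : n ≤ m)]; ring]
        rw [zpow_natCast, show (n:ℤ)+1-1 = (n:ℤ) by ring]
        have ih1 := ih (n+1) hnm
        have ih2 := ih n (by omega)
        rw [hcast] at ih1
        set c := m - (n + 1) with hc
        rw [show m + 1 - (n+1) = c + 1 by omega, show m - n = c + 1 by omega] at *
        rw [Pprod_succ t c] at *
        rw [Pprod_succ t n] at *
        have hpow : t ^ (c+1) * t ^ (n+1) = t ^ (m+1) := by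
          rw [← pow_add]; congr 1; omega
        rw [Pprod_succ t m]
        linear_combination (t ^ (c+1) - 1) * ih1 + t ^ (c+1) * (t ^ (n+1) - 1) * ih2 +
          Pprod t m * hpow

lemma sq_zpow (q : ℂ) (e : ℤ) : (q^2) ^ e = q ^ (2 * e) := by
  rw [← zpow_natCast q 2, ← zpow_mul]; norm_num

lemma gB_eq (q : ℂ) (hq0 : q ≠ 0) : ∀ m n : ℕ,
    gB q m n = q ^ (-(n:ℤ) * ((m:ℤ) - n)) * Gq (q^2) m (n:ℤ) := by
  have key : ∀ (a b c : ℤ) (x : ℂ), a + b = c → q^a * (q^b * x) = q^c * x := by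
    intro a b c x h; rw [← mul_assoc, ← zpow_add₀ hq0, h]
  intro m
  induction m with
  | zero =>
    intro n
    match n with
    | 0 => simp [gB, Gq]
    | n+1 =>
      rw [show gB q 0 (n+1) = 0 from rfl]
      rw [show Gq (q^2) 0 ((n+1:ℕ):ℤ) = 0 by simp only [Gq]; rw [if_neg (by positivity)]]
      ring
  | succ m ih =>
    intro n
    match n with
    | 0 => simp [gB, Gq_zero]
    | n+1 =>
      rw [show gB q (m+1) (n+1) = q ^ (-((n : ℤ) + 1)) * gB q m (n + 1) +
            q ^ ((m : ℤ) - n) * gB q m n from rfl]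
      rw [ih (n+1), ih n, Gq_succ (q^2) m _ (by positivity)]
      rw [show ((m:ℤ)+1-((n+1:ℕ):ℤ)) = (m:ℤ)-(n:ℤ) by push_cast; ring]
      rw [show ((n+1:ℕ):ℤ) - 1 = (n:ℤ) by push_cast; ring]
      rw [sq_zpow]
      push_cast
      rw [mul_add]
      rw [key (-((n:ℤ)+1)) (-((n:ℤ)+1) * ((m:ℤ) - ((n:ℤ)+1))) (-((n:ℤ)+1)*((m:ℤ)+1-((n:ℤ)+1))) _ (by ring)]
      rw [key ((m:ℤ)-n) (-(n:ℤ) * ((m:ℤ)-n)) ((-((n:ℤ)+1)*((m:ℤ)+1-((n:ℤ)+1))) + 2*((m:ℤ)-n)) _ (by ring)]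
      rw [← key (-((n:ℤ)+1)*((m:ℤ)+1-((n:ℤ)+1))) (2*((m:ℤ)-n)) _ (Gq (q^2) m (n:ℤ)) rfl]

lemma gB_eq_zero_iff (q : ℂ) (hq0 : q ≠ 0) (m n : ℕ) :
    gB q m n = 0 ↔ Gq (q^2) m (n:ℤ) = 0 := by
  rw [gB_eq q hq0, mul_eq_zero]
  have : q ^ (-(n:ℤ) * ((m:ℤ) - n)) ≠ 0 := zpow_ne_zero _ hq0
  tauto

section
variable {t : ℂ} {ℓ : ℕ}

lemma P_ne_zero (hℓ : 2 ≤ ℓ) (hq : IsPrimitiveRoot t ℓ) {n : ℕ} (hn : n < ℓ) :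
    Pprod t n ≠ 0 := by
  rw [Pprod, Finset.prod_ne_zero_iff]
  intro j hj
  rw [Finset.mem_range] at hj
  have := hq.pow_ne_one_of_pos_of_lt (l := j+1) (by omega) (by omega)
  intro h
  exact this (by linear_combination h)

lemma P_ell_zero (hq : IsPrimitiveRoot t ℓ) (hℓ : 2 ≤ ℓ) : Pprod t ℓ = 0 := by
  apply Finset.prod_eq_zero (i := ℓ - 1) (Finset.mem_range.2 (by omega))
  rw [show ℓ - 1 + 1 = ℓ by omega, hq.pow_eq_one]
  ring

lemma Gq_ne_zero (hℓ : 2 ≤ ℓ) (hq : IsPrimitiveRoot t ℓ) {m n : ℕ} (hnm : n ≤ m)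
    (hm : m < ℓ) : Gq t m (n : ℤ) ≠ 0 := by
  intro h
  have := Gfact t m n hnm
  rw [h, zero_mul] at this
  exact P_ne_zero hℓ hq hm this.symm

lemma Gq_ell_zero (hℓ : 2 ≤ ℓ) (hq : IsPrimitiveRoot t ℓ) {n : ℕ} (h1 : 0 < n)
    (h2 : n < ℓ) : Gq t ℓ (n : ℤ) = 0 := by
  have h := Gfact t ℓ n (by omega)
  rw [P_ell_zero hq hℓ] at h
  have p1 := P_ne_zero hℓ hq h2
  have p2 := P_ne_zero hℓ hq (show ℓ - n < ℓ by omega)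
  rcases mul_eq_zero.1 h with h' | h'
  · exact h'
  · rcases mul_eq_zero.1 h' with h'' | h''
    · exact absurd h'' p1
    · exact absurd h'' p2

lemma Gq_shift (ht0 : t ≠ 0) (hℓ : 2 ≤ ℓ) (hq : IsPrimitiveRoot t ℓ) :
    ∀ (m : ℕ) (n : ℤ), Gq t (m + ℓ) n = Gq t m n + Gq t m (n - ℓ) := by
  have htℓ : t ^ ℓ = 1 := hq.pow_eq_one
  intro m
  induction m with
  | zero =>
    intro n
    rw [Nat.zero_add]
    rcases lt_trichotomy n 0 with h | h | h
    · rw [Gq_neg t ℓ h, Gq_neg t 0 h, Gq_neg t 0 (by omega : n - ℓ < 0)]; ring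
    · subst h
      rw [Gq_zero, show Gq t 0 0 = 1 from Gq_zero t 0,
        Gq_neg t 0 (by omega : (0:ℤ) - ℓ < 0)]; ring
    · rcases lt_trichotomy n ℓ with h2 | h2 | h2
      · rw [show n = ((n.toNat : ℕ) : ℤ) by omega] at *
        rw [Gq_ell_zero hℓ hq (by omega) (by omega : n.toNat < ℓ),
          Gq_gt t 0 _ (by omega), Gq_neg t 0 (by omega : (n.toNat:ℤ) - ℓ < 0)]
        ring
      · subst h2
        rw [show ((ℓ:ℤ)) = ((ℓ:ℕ):ℤ) from rfl, Gq_diag, Gq_gt t 0 _ (by omega)]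
        simp [Gq]
      · rw [Gq_gt t ℓ n (by omega), Gq_gt t 0 n (by omega), Gq_gt t 0 (n - ℓ) (by omega)]
        ring
  | succ m ih =>
    intro n
    rcases lt_or_ge n 0 with hn | hn
    · rw [Gq_neg t _ hn, Gq_neg t _ hn, Gq_neg t _ (by omega : n - ℓ < 0)]; ring
    · have h1 : m + 1 + ℓ = (m + ℓ) + 1 := by omega
      have hpow : ∀ e : ℤ, t ^ (e + (ℓ:ℤ)) = t ^ e := by
        intro e
        rw [zpow_add₀ ht0, zpow_natCast, htℓ, mul_one]
      rw [h1, Gq_succ t _ n hn, ih n, ih (n-1), Gq_succ t m n hn]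
      rw [show ((m+ℓ:ℕ):ℤ) + 1 - n = ((m:ℤ) + 1 - n) + (ℓ:ℤ) by push_cast; ring, hpow]
      rcases lt_or_ge (n - ℓ) 0 with h2 | h2
      · rw [Gq_neg t (m+1) h2, Gq_neg t m h2, Gq_neg t m (by omega : n - 1 - ℓ < 0)]
        ring
      · rw [Gq_succ t m (n - ℓ) h2,
          show (m:ℤ) + 1 - (n - ℓ) = ((m:ℤ) + 1 - n) + (ℓ:ℤ) by ring, hpow,
          show n - (ℓ:ℤ) - 1 = n - 1 - ℓ by ring]
        ring

lemma Gq_lucas (ht0 : t ≠ 0) (hℓ : 2 ≤ ℓ) (hq : IsPrimitiveRoot t ℓ) :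
    ∀ (a b : ℕ), b < ℓ → ∀ n : ℤ,
      Gq t (a * ℓ + b) n =
        (if 0 ≤ n then ((a.choose (n / ℓ).toNat : ℕ) : ℂ) else 0) * Gq t b (n % ℓ) := by
  intro a
  induction a with
  | zero =>
    intro b hb n
    rw [Nat.zero_mul, Nat.zero_add]
    rcases lt_or_ge n 0 with hn | hn
    · rw [Gq_neg t b hn, if_neg (not_le.2 hn), zero_mul]
    · rw [if_pos hn]
      rcases lt_or_ge n ℓ with h | h
      · rw [Int.emod_eq_of_lt hn (by omega), Int.ediv_eq_zero_of_lt hn (by omega)]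
        norm_num
      · have h1 : Gq t b n = 0 := Gq_gt t b n (by omega)
        have h2 : 1 ≤ n / (ℓ:ℤ) := by
          rw [Int.le_ediv_iff_mul_le (by omega : (0:ℤ) < ℓ)]
          omega
        rw [h1, Nat.choose_eq_zero_of_lt (by omega : 0 < (n / (ℓ:ℤ)).toNat)]
        norm_num
  | succ a ih =>
    intro b hb n
    have h1 : (a+1) * ℓ + b = (a * ℓ + b) + ℓ := by ring
    rw [h1, Gq_shift ht0 hℓ hq, ih b hb n, ih b hb (n - ℓ), Int.sub_emod_right]
    rw [← add_mul]
    congr 1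
    rcases lt_or_ge n 0 with hn | hn
    · rw [if_neg (not_le.2 hn), if_neg (by omega), if_neg (not_le.2 hn)]
      ring
    · rcases lt_or_ge n ℓ with h | h
      · rw [if_pos hn, if_neg (by omega : ¬ (0:ℤ) ≤ n - ℓ), if_pos hn,
          Int.ediv_eq_zero_of_lt hn (by omega)]
        norm_num
      · have hd : (n - ℓ) / (ℓ:ℤ) = n / ℓ - 1 := by
          have h5 := Int.add_mul_ediv_right n (-1) (by omega : (ℓ:ℤ) ≠ 0)
          rw [show n + -1 * ℓ = n - ℓ by ring] at h5
          omega
        have hq1 : 1 ≤ n / (ℓ:ℤ) := by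
          rw [Int.le_ediv_iff_mul_le (by omega : (0:ℤ) < ℓ)]
          omega
        rw [if_pos hn, if_pos (by omega : (0:ℤ) ≤ n - ℓ), if_pos hn, hd]
        have htn : (n / (ℓ:ℤ)).toNat = (n / (ℓ:ℤ) - 1).toNat + 1 := by omega
        rw [htn, Nat.choose_succ_succ]
        push_cast
        ring

lemma div_mod_small {c : ℕ} (hc : c < ℓ) : ((c:ℤ) / ℓ = 0) ∧ ((c:ℤ) % ℓ = c) :=
  ⟨Int.ediv_eq_zero_of_lt (by positivity) (by omega),
   Int.emod_eq_of_lt (by positivity) (by omega)⟩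

lemma lucasA (ht0 : t ≠ 0) (hℓ : 2 ≤ ℓ) (hq : IsPrimitiveRoot t ℓ)
    (b r a₁ a₂ : ℕ) (hr : r < ℓ) (ha₂ : 1 ≤ a₂) (ha₂ℓ : a₂ < ℓ) :
    (Gq t (b * ℓ + r + (a₁ * ℓ + a₂)) ((a₁ * ℓ + a₂ : ℕ) : ℤ) = 0) ↔ ℓ ≤ r + a₂ := by
  have hN0 : (0:ℤ) ≤ ((a₁ * ℓ + a₂ : ℕ) : ℤ) := by positivity
  have hdiv : ((a₁ * ℓ + a₂ : ℕ) : ℤ) / ℓ = a₁ := by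
    push_cast
    rw [show (a₁:ℤ) * ℓ + a₂ = a₂ + a₁ * ℓ by ring,
      Int.add_mul_ediv_right _ _ (by omega : (ℓ:ℤ) ≠ 0), (div_mod_small ha₂ℓ).1]
    ring
  have hmod : ((a₁ * ℓ + a₂ : ℕ) : ℤ) % ℓ = (a₂ : ℤ) := by
    push_cast
    rw [show (a₁:ℤ) * ℓ + a₂ = a₂ + a₁ * ℓ by ring, Int.add_mul_emod_self_right,
      (div_mod_small ha₂ℓ).2]
  rcases lt_or_ge (r + a₂) ℓ with h | h
  · have he : b * ℓ + r + (a₁ * ℓ + a₂) = (b + a₁) * ℓ + (r + a₂) := by ring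
    rw [he, Gq_lucas ht0 hℓ hq (b + a₁) (r + a₂) h, hdiv, hmod, if_pos hN0]
    have c1 : ((b + a₁).choose ((a₁:ℤ).toNat) : ℂ) ≠ 0 := by
      rw [Int.toNat_natCast]
      exact_mod_cast Nat.cast_ne_zero.2 (Nat.choose_pos (by omega)).ne'
    have c2 : Gq t (r + a₂) ((a₂ : ℕ) : ℤ) ≠ 0 := Gq_ne_zero hℓ hq (by omega) h
    simp only [mul_eq_zero]
    constructor
    · rintro (h' | h')
      · exact absurd h' c1
      · exact absurd h' c2
    · omega
  · have he : b * ℓ + r + (a₁ * ℓ + a₂) = (b + a₁ + 1) * ℓ + (r + a₂ - ℓ) := by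
      have h9 : (b + a₁ + 1) * ℓ = b * ℓ + a₁ * ℓ + ℓ := by ring
      omega
    have hlt2 : r + a₂ - ℓ < ℓ := by omega
    have hz : Gq t (r + a₂ - ℓ) ((a₂:ℕ):ℤ) = 0 :=
      Gq_gt t (r + a₂ - ℓ) ((a₂:ℕ):ℤ) (by omega)
    rw [he, Gq_lucas ht0 hℓ hq _ (r + a₂ - ℓ) hlt2, hmod, hz, mul_zero]
    simp [h]

lemma lucasB (ht0 : t ≠ 0) (hℓ : 2 ≤ ℓ) (hq : IsPrimitiveRoot t ℓ)
    (b r a₂ : ℕ) (hr : r < ℓ) (ha₂ : 1 ≤ a₂) (ha₂ℓ : a₂ < ℓ) :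
    (Gq t (b * ℓ + r) ((ℓ - a₂ : ℕ) : ℤ) ≠ 0) ↔ ℓ - a₂ ≤ r := by
  have hlt : ℓ - a₂ < ℓ := by omega
  rw [Gq_lucas ht0 hℓ hq b r hr, (div_mod_small hlt).1, (div_mod_small hlt).2,
    if_pos (by positivity)]
  simp only [Int.toNat_zero, Nat.choose_zero_right, Nat.cast_one, one_mul]
  constructor
  · intro h
    by_contra hc
    exact h (Gq_gt t r _ (by omega))
  · intro h
    exact Gq_ne_zero hℓ hq h hr
end

/-- In the Weyl module `Δ_q(i)`, for an `H`-eigenvalue `d > 0` (eigenspace `ℂ·m_k`,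
`i - 2k = d`) and `a₁ ≥ 0`, `1 ≤ a₂ < ℓ` with `d ≥ a₁ℓ + a₂`:
`F^{(a₁ℓ+a₂)} m_k = 0` iff `m_k = F^{(ℓ-a₂)} y` for some `y` in the `H`-eigenspace of
eigenvalue `d + 2(ℓ - a₂)`. -/
theorem weyl_kernel_image (q : ℂ) (ℓ i : ℕ) (hq0 : q ≠ 0) (hℓ : 2 ≤ ℓ)
    (hq : IsPrimitiveRoot (q ^ 2) ℓ)
    (d k : ℤ) (hd : 0 < d) (hk0 : 0 ≤ k) (hki : k ≤ (i : ℤ)) (hdk : (i : ℤ) - 2 * k = d)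
    (a₁ a₂ : ℕ) (ha₂ : 1 ≤ a₂) (ha₂ℓ : a₂ < ℓ) (hda : ((a₁ * ℓ + a₂ : ℕ) : ℤ) ≤ d) :
    Fop q i (a₁ * ℓ + a₂) (delta k) = 0 ↔
      ∃ y : ℤ → ℂ, (∀ j, y j ≠ 0 → 0 ≤ j ∧ j ≤ (i : ℤ)) ∧
        (∀ j, y j ≠ 0 → (i : ℤ) - 2 * j = d + 2 * ((ℓ : ℤ) - (a₂ : ℤ))) ∧
        delta k = Fop q i (ℓ - a₂) y := by
  have ht0 : (q^2 : ℂ) ≠ 0 := pow_ne_zero 2 hq0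
  set N := a₁ * ℓ + a₂ with hN
  obtain ⟨b, r, hbr, hrℓ⟩ : ∃ b r, b * ℓ + r = k.toNat ∧ r < ℓ :=
    ⟨k.toNat / ℓ, k.toNat % ℓ, Nat.div_add_mod' _ _, Nat.mod_lt _ (by omega)⟩
  have hrk : r ≤ k.toNat := by omega
  have hkN0 : (0:ℤ) ≤ k + (N:ℤ) := by positivity
  have hkN : k + (N:ℤ) ≤ (i:ℤ) := by omega
  have htoNat : (k + (N:ℤ)).toNat = k.toNat + N := by omega
  have key1 : Fop q i N (delta k) = 0 ↔ gB q (k.toNat + N) N = 0 := by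
    constructor
    · intro h
      have h2 := congrFun h (k + (N:ℤ))
      simp only [Pi.zero_apply, Fop] at h2
      rw [if_pos ⟨hkN0, hkN⟩, show k + (N:ℤ) - (N:ℤ) = k by ring, htoNat] at h2
      simpa [delta] using h2
    · intro h
      funext j
      simp only [Pi.zero_apply, Fop]
      by_cases hj : j = k + (N:ℤ)
      · subst hj
        rw [htoNat, show k + (N:ℤ) - (N:ℤ) = k by ring]
        simp [delta, h]
      · have hz : delta k (j - (N:ℤ)) = 0 := by
          simp only [delta]
          exact if_neg (by omega)
        rw [hz, mul_zero, ite_self]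
  have key2 : gB q (k.toNat + N) N = 0 ↔ ℓ ≤ r + a₂ := by
    rw [gB_eq_zero_iff q hq0, show k.toNat = b * ℓ + r from hbr.symm]
    exact lucasA ht0 hℓ hq b r a₁ a₂ hrℓ ha₂ ha₂ℓ
  rw [key1, key2]
  constructor
  · intro h
    have hba : ℓ - a₂ ≤ r := by omega
    have hgq : Gq (q^2) (b * ℓ + r) ((ℓ - a₂ : ℕ) : ℤ) ≠ 0 :=
      (lucasB ht0 hℓ hq b r a₂ hrℓ ha₂ ha₂ℓ).2 hba
    have hgb : gB q k.toNat (ℓ - a₂) ≠ 0 := by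
      intro hzz
      have h3 := (gB_eq_zero_iff q hq0 _ _).1 hzz
      rw [show k.toNat = b * ℓ + r from hbr.symm] at h3
      exact hgq h3
    refine ⟨fun j => if j = k - ((ℓ - a₂ : ℕ) : ℤ) then (gB q k.toNat (ℓ - a₂))⁻¹ else 0,
      ?_, ?_, ?_⟩
    · intro j hj
      have hj2 : j = k - ((ℓ - a₂ : ℕ) : ℤ) := by
        by_contra hc; exact hj (if_neg hc)
      subst hj2
      constructor
      · omega
      · omega
    · intro j hj
      have hj2 : j = k - ((ℓ - a₂ : ℕ) : ℤ) := by
        by_contra hc; exact hj (if_neg hc)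
      subst hj2
      omega
    · funext j
      by_cases hj : j = k
      · subst hj
        simp [Fop, delta, hk0, hki, mul_inv_cancel₀ hgb]
      · have hne : ¬(j - ((ℓ - a₂:ℕ):ℤ) = k - ((ℓ - a₂:ℕ):ℤ)) := by omega
        simp [Fop, delta, hj, hne]
  · rintro ⟨y, hy1, hy2, hy3⟩
    have h2 := congrFun hy3 k
    simp only [Fop, delta] at h2
    rw [if_pos (show (0:ℤ) ≤ k ∧ k ≤ (i:ℤ) from ⟨hk0, hki⟩)] at h2
    have hgb : gB q k.toNat (ℓ - a₂) ≠ 0 := by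
      intro hzz
      rw [hzz] at h2
      simp at h2
    have hgq : Gq (q^2) (b * ℓ + r) ((ℓ - a₂ : ℕ) : ℤ) ≠ 0 := by
      intro hzz
      apply hgb
      rw [gB_eq_zero_iff q hq0, show k.toNat = b * ℓ + r from hbr.symm]
      exact hzz
    have := (lucasB ht0 hℓ hq b r a₂ hrℓ ha₂ ha₂ℓ).1 hgq
    omega
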